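/- Any family of fewer than (1-2^{-x})^{-t/(x+1)} subsets of V(H), each of size at least t, fails to cover the set of all vertex covers of a graph H of maximum degree x; that is, there exists a vertex cover T of H that contains no member of the family. -/

import Mathlib

set_option linter.unusedSectionVars false

open SimpleGraph

section auxGeneric

private lemma card_forced {α : Type} [Fintype α] [DecidableEq α] (s : Finset α) (g : α → Bool) :
    (Finset.univ.filter (fun f : α → Bool => ∀ e ∈ s, f e = g e)).card
      = 2 ^ (Fintype.card α - s.card) := by
  have : (Finset.univ.filter (fun f : α → Bool => ∀ e ∈ s, f e = g e)).card
      = (Finset.univ : Finset ((↥(sᶜ : Finset α)) → Bool)).card := by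
    refine Finset.card_bij' (fun f _ => fun e => f e.1)
      (fun h _ => fun e => if he : e ∈ s then g e else h ⟨e, by simp [he]⟩) ?_ ?_ ?_ ?_
    · intro f hf
      exact Finset.mem_univ _
    · intro h hh
      simp only [Finset.mem_filter, Finset.mem_univ, true_and]
      intro e he
      simp [he]
    · intro f hf
      funext e
      by_cases he : e ∈ s
      · simp only [he, dif_pos]
        exact ((Finset.mem_filter.1 hf).2 e he).symm
      · simp [he]
    · intro h hh
      funext e
      have : (e : α) ∉ s := Finset.mem_compl.1 e.2
      simp [this]
  rw [this]
  simp [Fintype.card_fun, Finset.card_compl]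

private lemma card_split {α : Type} [Fintype α] [DecidableEq α] (s : Finset α)
    (P Q : (α → Bool) → Prop) [DecidablePred P] [DecidablePred Q]
    (hP : ∀ f g : α → Bool, (∀ e ∈ s, f e = g e) → (P f ↔ P g))
    (hQ : ∀ f g : α → Bool, (∀ e ∉ s, f e = g e) → (Q f ↔ Q g)) :
    (Finset.univ.filter (fun f => P f ∧ Q f)).card * 2 ^ (Fintype.card α)
      ≤ (Finset.univ.filter P).card * (Finset.univ.filter Q).card := by
  classical
  have key : ((Finset.univ.filter (fun f => P f ∧ Q f)) ×ˢ (Finset.univ : Finset (α → Bool))).card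
      ≤ ((Finset.univ.filter P) ×ˢ (Finset.univ.filter Q)).card := by
    apply Finset.card_le_card_of_injOn
      (fun p => (fun e => if e ∈ s then p.1 e else p.2 e, fun e => if e ∈ s then p.2 e else p.1 e))
    · rintro ⟨f, g⟩ hp
      simp only [Finset.mem_coe, Finset.mem_product, Finset.mem_filter, Finset.mem_univ, true_and] at hp ⊢
      constructor
      · exact (hP _ f (fun e he => by simp [he])).2 hp.1.1
      · exact (hQ _ f (fun e he => by simp [he])).2 hp.1.2
    · rintro ⟨f, g⟩ _ ⟨f', g'⟩ _ h
      simp only [Prod.mk.injEq] at h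
      have h1 := congrFun h.1
      have h2 := congrFun h.2
      have e1 : f = f' := by
        funext e
        by_cases he : e ∈ s
        · simpa [he] using h1 e
        · simpa [he] using h2 e
      have e2 : g = g' := by
        funext e
        by_cases he : e ∈ s
        · simpa [he] using h2 e
        · simpa [he] using h1 e
      simp [e1, e2]
  simpa [Finset.card_product, Fintype.card_fun] using key

end auxGeneric

section auxGraph

variable {V : Type} [Fintype V] [DecidableEq V] [LinearOrder V]

private def esup (e : Sym2 V) : V := Sym2.lift ⟨fun a b => a ⊔ b, fun a b => sup_comm a b⟩ e
private def einf (e : Sym2 V) : V := Sym2.lift ⟨fun a b => a ⊓ b, fun a b => inf_comm a b⟩ e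
private def epick (e : Sym2 V) (b : Bool) : V := if b then esup e else einf e

private lemma epick_mem (e : Sym2 V) (b : Bool) : epick e b ∈ e := by
  induction e using Sym2.ind with
  | _ u v =>
    rcases le_total u v with h | h <;>
      simp [epick, esup, einf, max_eq_right, max_eq_left,
        min_eq_left, min_eq_right, h, Sym2.mem_iff] <;> cases b <;> simp

private lemma einf_ne_esup {e : Sym2 V} (he : ¬ e.IsDiag) : einf e ≠ esup e := by
  induction e using Sym2.ind with
  | _ u v =>
    have huv : u ≠ v := by simpa [Sym2.isDiag_iff_proj_eq] using he
    simp only [einf, esup, Sym2.lift_mk]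
    rcases le_total u v with h | h
    · simp [min_eq_left h, max_eq_right h]; exact huv
    · simp [min_eq_right h, max_eq_left h]
      exact fun hvu => huv hvu.symm

variable (H : SimpleGraph V) [DecidableRel H.Adj]

private def coverOf (f : Sym2 V → Bool) : Finset V :=
  H.edgeFinset.image (fun e => epick e (f e))

private lemma coverOf_isCover (f : Sym2 V → Bool) :
    ∀ ⦃u v : V⦄, H.Adj u v → u ∈ coverOf H f ∨ v ∈ coverOf H f := by
  intro u v huv
  have he : s(u, v) ∈ H.edgeFinset := by rwa [mem_edgeFinset, mem_edgeSet]
  have hmem : epick s(u, v) (f s(u, v)) ∈ coverOf H f :=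
    Finset.mem_image_of_mem _ he
  have := epick_mem s(u, v) (f s(u, v))
  rw [Sym2.mem_iff] at this
  rcases this with h | h
  · left; rwa [h] at hmem
  · right; rwa [h] at hmem

private lemma mem_coverOf_iff (f : Sym2 V → Bool) (v : V) :
    v ∈ coverOf H f ↔ ∃ e ∈ H.incidenceFinset v, epick e (f e) = v := by
  constructor
  · intro hv
    rcases Finset.mem_image.1 hv with ⟨e, he, hev⟩
    refine ⟨e, ?_, hev⟩
    rw [mem_incidenceFinset]
    exact ⟨mem_edgeFinset.1 he, hev ▸ epick_mem e (f e)⟩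
  · rintro ⟨e, he, hev⟩
    have : e ∈ H.edgeFinset := by
      rw [mem_edgeFinset]
      exact ((mem_incidenceFinset H v e).1 he).1
    exact Finset.mem_image.2 ⟨e, this, hev⟩

private lemma coverOf_local {f g : Sym2 V → Bool} (v : V)
    (h : ∀ e ∈ H.incidenceFinset v, f e = g e) :
    (v ∈ coverOf H f ↔ v ∈ coverOf H g) := by
  rw [mem_coverOf_iff, mem_coverOf_iff]
  constructor <;> rintro ⟨e, he, hev⟩ <;> exact ⟨e, he, by rw [← hev, h e he]⟩

private lemma incidence_disjoint {u v : V} (hne : u ≠ v) (hadj : ¬ H.Adj u v) :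
    Disjoint (H.incidenceFinset u) (H.incidenceFinset v) := by
  rw [Finset.disjoint_left]
  intro e heu hev
  rw [mem_incidenceFinset] at heu hev
  have h2 : e = s(u, v) := (Sym2.mem_and_mem_iff hne).1 ⟨heu.2, hev.2⟩
  have h1 := heu.1
  rw [h2, mem_edgeSet] at h1
  exact hadj h1

private lemma epick_true (e : Sym2 V) : epick e true = esup e := rfl
private lemma epick_false (e : Sym2 V) : epick e false = einf e := rfl

private lemma w_card_le (v : V) :
    (Finset.univ.filter (fun f : Sym2 V → Bool => v ∈ coverOf H f)).card
      + 2 ^ (Fintype.card (Sym2 V) - H.degree v) ≤ 2 ^ Fintype.card (Sym2 V) := by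
  classical
  set g : Sym2 V → Bool := fun e => decide (einf e = v) with hg
  set W := Finset.univ.filter (fun f : Sym2 V → Bool => v ∈ coverOf H f) with hW
  set F := Finset.univ.filter (fun f : Sym2 V → Bool => ∀ e ∈ H.incidenceFinset v, f e = g e)
    with hF
  have hdisj : Disjoint W F := by
    rw [Finset.disjoint_left]
    intro f hfW hfF
    rw [hW, Finset.mem_filter] at hfW
    rw [hF, Finset.mem_filter] at hfF
    rcases (mem_coverOf_iff H f v).1 hfW.2 with ⟨e, he, hev⟩
    have hfe : f e = g e := hfF.2 e he
    have hinc := (H.mem_incidenceFinset v e).1 he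
    have hnd : ¬ e.IsDiag := H.not_isDiag_of_mem_edgeSet hinc.1
    have hne := einf_ne_esup (V := V) hnd
    by_cases hinf : einf e = v
    · have hgt : g e = true := by simp [hg, hinf]
      rw [hfe, hgt, epick_true] at hev
      exact hne (hinf.trans hev.symm)
    · have hgf : g e = false := by simp [hg, hinf]
      rw [hfe, hgf, epick_false] at hev
      exact hinf hev
  have hcardF : F.card = 2 ^ (Fintype.card (Sym2 V) - H.degree v) := by
    rw [hF, card_forced, H.card_incidenceFinset_eq_degree]
  have hsub : W ∪ F ⊆ Finset.univ := Finset.subset_univ _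
  have := Finset.card_le_card hsub
  rw [Finset.card_union_of_disjoint hdisj] at this
  rw [← hcardF]
  simpa [Fintype.card_fun] using this

private lemma count_bad (b : Finset V) (hind : ∀ u ∈ b, ∀ w ∈ b, u ≠ w → ¬ H.Adj u w) :
    (Finset.univ.filter (fun f : Sym2 V → Bool => ∀ v ∈ b, v ∈ coverOf H f)).card
        * (2 ^ Fintype.card (Sym2 V)) ^ b.card
      ≤ 2 ^ Fintype.card (Sym2 V)
        * ∏ v ∈ b, (Finset.univ.filter (fun f : Sym2 V → Bool => v ∈ coverOf H f)).card := by
  classical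
  induction b using Finset.induction_on with
  | empty => simp [Fintype.card_fun]
  | @insert v b' hvb ih =>
    have hind' : ∀ u ∈ b', ∀ w ∈ b', u ≠ w → ¬ H.Adj u w := fun u hu w hw =>
      hind u (Finset.mem_insert_of_mem hu) w (Finset.mem_insert_of_mem hw)
    have core : (Finset.univ.filter
          (fun f : Sym2 V → Bool => ∀ u ∈ insert v b', u ∈ coverOf H f)).card
          * 2 ^ Fintype.card (Sym2 V)
        ≤ (Finset.univ.filter (fun f : Sym2 V → Bool => v ∈ coverOf H f)).card
          * (Finset.univ.filter (fun f : Sym2 V → Bool => ∀ u ∈ b', u ∈ coverOf H f)).card := by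
      have heq : (Finset.univ.filter
            (fun f : Sym2 V → Bool => ∀ u ∈ insert v b', u ∈ coverOf H f))
          = (Finset.univ.filter
            (fun f : Sym2 V → Bool => v ∈ coverOf H f ∧ ∀ u ∈ b', u ∈ coverOf H f)) := by
        apply Finset.filter_congr
        intro f _
        simp [Finset.forall_mem_insert]
      rw [heq]
      apply card_split (H.incidenceFinset v)
      · intro f g hfg
        exact coverOf_local H v hfg
      · intro f g hfg
        refine forall₂_congr (fun u hu => ?_)
        apply coverOf_local H u
        intro e he
        apply hfg
        have hvb' : u ≠ v := fun h => hvb (h ▸ hu)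
        have hadj : ¬ H.Adj u v := hind u (Finset.mem_insert_of_mem hu) v
          (Finset.mem_insert_self v b') hvb'
        exact Finset.disjoint_left.1 (incidence_disjoint H hvb' hadj) he
    calc (Finset.univ.filter
          (fun f : Sym2 V → Bool => ∀ u ∈ insert v b', u ∈ coverOf H f)).card
          * (2 ^ Fintype.card (Sym2 V)) ^ (insert v b').card
        = ((Finset.univ.filter
            (fun f : Sym2 V → Bool => ∀ u ∈ insert v b', u ∈ coverOf H f)).card
          * 2 ^ Fintype.card (Sym2 V)) * (2 ^ Fintype.card (Sym2 V)) ^ b'.card := by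
          rw [Finset.card_insert_of_notMem hvb, pow_succ]; ring
      _ ≤ ((Finset.univ.filter (fun f : Sym2 V → Bool => v ∈ coverOf H f)).card
          * (Finset.univ.filter (fun f : Sym2 V → Bool => ∀ u ∈ b', u ∈ coverOf H f)).card)
          * (2 ^ Fintype.card (Sym2 V)) ^ b'.card := Nat.mul_le_mul_right _ core
      _ = (Finset.univ.filter (fun f : Sym2 V → Bool => v ∈ coverOf H f)).card
          * ((Finset.univ.filter (fun f : Sym2 V → Bool => ∀ u ∈ b', u ∈ coverOf H f)).card
            * (2 ^ Fintype.card (Sym2 V)) ^ b'.card) := by ring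
      _ ≤ (Finset.univ.filter (fun f : Sym2 V → Bool => v ∈ coverOf H f)).card
          * (2 ^ Fintype.card (Sym2 V)
            * ∏ u ∈ b', (Finset.univ.filter
                (fun f : Sym2 V → Bool => u ∈ coverOf H f)).card) :=
          Nat.mul_le_mul_left _ (ih hind')
      _ = 2 ^ Fintype.card (Sym2 V)
          * ∏ u ∈ insert v b', (Finset.univ.filter
              (fun f : Sym2 V → Bool => u ∈ coverOf H f)).card := by
          rw [Finset.prod_insert hvb]; ring

end auxGraph

section greedy

variable {V : Type} [Fintype V] [DecidableEq V]
variable (H : SimpleGraph V) [DecidableRel H.Adj]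

private lemma exists_indep (x : ℕ) (hdeg : ∀ v, H.degree v ≤ x) (a : Finset V) :
    ∃ b ⊆ a, (∀ u ∈ b, ∀ w ∈ b, u ≠ w → ¬H.Adj u w) ∧ a.card ≤ (x + 1) * b.card := by
  classical
  induction a using Finset.strongInductionOn with
  | _ a ih =>
    rcases Finset.eq_empty_or_nonempty a with rfl | ⟨v, hv⟩
    · exact ⟨∅, Finset.Subset.refl _, by simp, by simp⟩
    · set s := insert v (H.neighborFinset v) with hs
      set a₂ := a \ s with ha₂
      have hss : a₂ ⊂ a := by
        refine Finset.ssubset_iff_of_subset (Finset.sdiff_subset) |>.2 ?_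
        exact ⟨v, hv, by simp [ha₂, hs]⟩
      rcases ih a₂ hss with ⟨b₂, hb₂sub, hb₂ind, hb₂card⟩
      have hvb₂ : v ∉ b₂ := fun h => by
        have := hb₂sub h
        simp [ha₂, hs] at this
      refine ⟨insert v b₂, ?_, ?_, ?_⟩
      · intro u hu
        rcases Finset.mem_insert.1 hu with rfl | hu
        · exact hv
        · exact (Finset.sdiff_subset) (hb₂sub hu)
      · have key : ∀ w ∈ b₂, ¬ H.Adj v w := by
          intro w hw hadj
          have := hb₂sub hw
          rw [ha₂, Finset.mem_sdiff] at this
          exact this.2 (by simp [hs, SimpleGraph.mem_neighborFinset, hadj])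
        intro u hu w hw hne
        rcases Finset.mem_insert.1 hu with hu' | hu' <;>
          rcases Finset.mem_insert.1 hw with hw' | hw'
        · exact absurd (hu'.trans hw'.symm) hne
        · subst hu'; exact key w hw'
        · subst hw'; exact fun hadj => key u hu' hadj.symm
        · exact hb₂ind u hu' w hw' hne
      · have h1 : a.card ≤ a₂.card + s.card := by
          have hsubu : a ⊆ a₂ ∪ s := by
            intro u hu
            by_cases hus : u ∈ s
            · exact Finset.mem_union_right _ hus
            · exact Finset.mem_union_left _ (by simp [ha₂, hu, hus])
          calc a.card ≤ (a₂ ∪ s).card := Finset.card_le_card hsubu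
            _ ≤ a₂.card + s.card := Finset.card_union_le _ _
        have h2 : s.card ≤ x + 1 := by
          calc s.card ≤ (H.neighborFinset v).card + 1 := Finset.card_insert_le _ _
            _ ≤ x + 1 := by
              have := hdeg v
              rw [← H.card_neighborFinset_eq_degree v] at this
              omega
        have h3 : (insert v b₂).card = b₂.card + 1 := Finset.card_insert_of_notMem hvb₂
        calc a.card ≤ a₂.card + s.card := h1
          _ ≤ (x + 1) * b₂.card + (x + 1) := by omega
          _ = (x + 1) * (insert v b₂).card := by rw [h3]; ring

end greedy

/-- `C` is a vertex cover of `G`: it is incident to every edge. -/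
def IsVertexCoverF {V : Type} (G : SimpleGraph V) (C : Finset V) : Prop :=
  ∀ ⦃u v : V⦄, G.Adj u v → u ∈ C ∨ v ∈ C

/-- Any family of fewer than `(1-2^{-x})^{-t/(x+1)}` subsets of `V(H)`, each of size at
least `t`, fails to cover the set of all vertex covers of a graph `H` of maximum degree
`x`: some vertex cover `T` of `H` contains no member of the family. -/
theorem small_family_fails_to_cover {V : Type} [Fintype V] [DecidableEq V]
    (H : SimpleGraph V) [DecidableRel H.Adj] (t : ℕ) (A : Finset (Finset V))
    (hA : ∀ a ∈ A, t ≤ a.card)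
    (hcard : (A.card : ℝ) <
      (1 - (2 : ℝ) ^ (-(H.maxDegree : ℝ))) ^ (-(t : ℝ) / ((H.maxDegree : ℝ) + 1))) :
    ∃ T : Finset V, IsVertexCoverF H T ∧ ∀ a ∈ A, ¬ a ⊆ T := by
  letI : LinearOrder V := LinearOrder.lift' (Fintype.equivFin V) (Fintype.equivFin V).injective
  set x := H.maxDegree with hxdef
  rcases Nat.eq_zero_or_pos x with hx0 | hxpos
  · -- max degree zero: no edges at all, and the family must be empty
    have hnoadj : ∀ ⦃u v : V⦄, ¬ H.Adj u v := by
      intro u v hadj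
      have h1 : 0 < H.degree u := by
        rw [← H.card_neighborFinset_eq_degree]
        exact Finset.card_pos.2 ⟨v, (H.mem_neighborFinset u v).2 hadj⟩
      have h2 := H.degree_le_maxDegree u
      omega
    have hRle : (1 - (2 : ℝ) ^ (-(H.maxDegree : ℝ))) ^ (-(t : ℝ) / ((H.maxDegree : ℝ) + 1))
        ≤ 1 := by
      have hbase : (1 - (2 : ℝ) ^ (-(H.maxDegree : ℝ))) = 0 := by
        rw [← hxdef, hx0]
        norm_num
      rw [hbase]
      exact Real.zero_rpow_le_one _
    have hAempty : A = ∅ := by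
      have : (A.card : ℝ) < 1 := lt_of_lt_of_le hcard hRle
      have : A.card = 0 := by exact_mod_cast Nat.lt_one_iff.1 (by exact_mod_cast this)
      exact Finset.card_eq_zero.1 this
    refine ⟨∅, ?_, ?_⟩
    · intro u v hadj
      exact (hnoadj hadj).elim
    · intro a ha
      rw [hAempty] at ha
      exact absurd ha (Finset.notMem_empty a)
  · -- main case
    set M := Fintype.card (Sym2 V) with hM
    set q : ℝ := (2 : ℝ) ^ (-(x : ℝ)) with hq
    have hq0 : 0 < q := Real.rpow_pos_of_pos (by norm_num) _
    have hq1 : q < 1 := by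
      apply Real.rpow_lt_one_of_one_lt_of_neg (by norm_num)
      simpa using hxpos
    have h1q0 : (0 : ℝ) < 1 - q := by linarith
    have h1q1 : 1 - q ≤ 1 := by linarith
    set c : ℝ := (1 - q) ^ ((t : ℝ) / ((x : ℝ) + 1)) with hc
    have hc0 : 0 < c := Real.rpow_pos_of_pos h1q0 _
    have hcardA : (A.card : ℝ) < c⁻¹ := by
      have : -(t : ℝ) / ((x : ℝ) + 1) = -((t : ℝ) / ((x : ℝ) + 1)) := by ring
      rw [hc, ← Real.rpow_neg (le_of_lt h1q0), ← this]
      exact hcard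
    -- per-set bound
    have perA : ∀ a ∈ A,
        ((Finset.univ.filter (fun f : Sym2 V → Bool => a ⊆ coverOf H f)).card : ℝ)
          ≤ c * 2 ^ M := by
      intro a ha
      obtain ⟨b, hba, hbind, hbcard⟩ := exists_indep H x (H.degree_le_maxDegree) a
      set k := b.card with hk
      -- step 1
      have step1 : (Finset.univ.filter (fun f : Sym2 V → Bool => a ⊆ coverOf H f)).card
          ≤ (Finset.univ.filter (fun f : Sym2 V → Bool => ∀ v ∈ b, v ∈ coverOf H f)).card := by
        apply Finset.card_le_card
        intro f hf
        rw [Finset.mem_filter] at hf ⊢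
        exact ⟨hf.1, fun v hv => hf.2 (hba hv)⟩
      -- real bound on single-vertex counts
      have wbound : ∀ v : V,
          ((Finset.univ.filter (fun f : Sym2 V → Bool => v ∈ coverOf H f)).card : ℝ)
            ≤ (1 - q) * 2 ^ M := by
        intro v
        have hnat := w_card_le H v
        have hdM : H.degree v ≤ M := by
          rw [← H.card_incidenceFinset_eq_degree]
          exact Finset.card_le_univ _
        have hdx : H.degree v ≤ x := H.degree_le_maxDegree v
        have hreal : ((Finset.univ.filter
              (fun f : Sym2 V → Bool => v ∈ coverOf H f)).card : ℝ)
            + 2 ^ (M - H.degree v) ≤ 2 ^ M := by exact_mod_cast hnat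
        have hpow : (2 : ℝ) ^ M * q ≤ 2 ^ (M - H.degree v) := by
          have hqd : q ≤ (2 : ℝ) ^ (-(H.degree v : ℝ)) := by
            apply Real.rpow_le_rpow_of_exponent_le (by norm_num)
            simp only [neg_le_neg_iff]
            exact_mod_cast hdx
          have h2d : (2 : ℝ) ^ (-(H.degree v : ℝ)) = ((2 : ℝ) ^ (H.degree v : ℕ))⁻¹ := by
            rw [Real.rpow_neg (by norm_num), Real.rpow_natCast]
          have hsplit : (2 : ℝ) ^ (M - H.degree v) * 2 ^ (H.degree v) = 2 ^ M := by
            rw [← pow_add, Nat.sub_add_cancel hdM]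
          calc (2 : ℝ) ^ M * q ≤ (2 : ℝ) ^ M * ((2 : ℝ) ^ (H.degree v : ℕ))⁻¹ := by
                rw [← h2d]
                exact mul_le_mul_of_nonneg_left hqd (by positivity)
            _ = 2 ^ (M - H.degree v) := by
                rw [← hsplit]
                field_simp
        nlinarith [hreal, hpow]
      -- combine via count_bad
      have step2 := count_bad H b hbind
      have step2R : ((Finset.univ.filter
            (fun f : Sym2 V → Bool => ∀ v ∈ b, v ∈ coverOf H f)).card : ℝ)
            * ((2 : ℝ) ^ M) ^ k
          ≤ 2 ^ M * ∏ v ∈ b,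
            ((Finset.univ.filter (fun f : Sym2 V → Bool => v ∈ coverOf H f)).card : ℝ) := by
        exact_mod_cast step2
      have step3 : (∏ v ∈ b,
            ((Finset.univ.filter (fun f : Sym2 V → Bool => v ∈ coverOf H f)).card : ℝ))
          ≤ ((1 - q) * 2 ^ M) ^ k := by
        rw [hk, ← Finset.prod_const]
        apply Finset.prod_le_prod
        · intro v _; positivity
        · intro v _; exact wbound v
      have hNb : ((Finset.univ.filter
            (fun f : Sym2 V → Bool => ∀ v ∈ b, v ∈ coverOf H f)).card : ℝ)
          ≤ (1 - q) ^ k * 2 ^ M := by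
        have hpos : (0 : ℝ) < ((2 : ℝ) ^ M) ^ k := by positivity
        rw [← mul_le_mul_iff_of_pos_right hpos]
        calc ((Finset.univ.filter
              (fun f : Sym2 V → Bool => ∀ v ∈ b, v ∈ coverOf H f)).card : ℝ)
              * ((2 : ℝ) ^ M) ^ k
            ≤ 2 ^ M * ∏ v ∈ b, ((Finset.univ.filter
                (fun f : Sym2 V → Bool => v ∈ coverOf H f)).card : ℝ) := step2R
          _ ≤ 2 ^ M * ((1 - q) * 2 ^ M) ^ k := by
              apply mul_le_mul_of_nonneg_left step3 (by positivity)
          _ = (1 - q) ^ k * 2 ^ M * ((2 : ℝ) ^ M) ^ k := by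
              rw [mul_pow]; ring
      -- exponent comparison
      have hexp : (t : ℝ) / ((x : ℝ) + 1) ≤ (k : ℝ) := by
        rw [div_le_iff₀ (by positivity)]
        have h1 : (t : ℝ) ≤ (a.card : ℝ) := by exact_mod_cast hA a ha
        have h2 : (a.card : ℝ) ≤ ((x : ℝ) + 1) * (k : ℝ) := by
          exact_mod_cast hbcard
        linarith
      have hkc : (1 - q) ^ k ≤ c := by
        rw [hc, ← Real.rpow_natCast (1 - q) k]
        exact Real.rpow_le_rpow_of_exponent_ge h1q0 h1q1 hexp
      calc ((Finset.univ.filter (fun f : Sym2 V → Bool => a ⊆ coverOf H f)).card : ℝ)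
          ≤ ((Finset.univ.filter
              (fun f : Sym2 V → Bool => ∀ v ∈ b, v ∈ coverOf H f)).card : ℝ) := by
            exact_mod_cast step1
        _ ≤ (1 - q) ^ k * 2 ^ M := hNb
        _ ≤ c * 2 ^ M := by
            apply mul_le_mul_of_nonneg_right hkc (by positivity)
    -- union bound
    by_contra hcon
    push_neg at hcon
    have hall : ∀ f : Sym2 V → Bool, ∃ a ∈ A, a ⊆ coverOf H f := by
      intro f
      exact hcon (coverOf H f) (fun u v huv => coverOf_isCover H f huv)
    have hsub : (Finset.univ : Finset (Sym2 V → Bool))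
        ⊆ A.biUnion (fun a => Finset.univ.filter (fun f : Sym2 V → Bool => a ⊆ coverOf H f)) := by
      intro f _
      rcases hall f with ⟨a, ha, hsub⟩
      exact Finset.mem_biUnion.2 ⟨a, ha, Finset.mem_filter.2 ⟨Finset.mem_univ f, hsub⟩⟩
    have hcount : (2 : ℕ) ^ M ≤ ∑ a ∈ A,
        (Finset.univ.filter (fun f : Sym2 V → Bool => a ⊆ coverOf H f)).card := by
      calc (2 : ℕ) ^ M = (Finset.univ : Finset (Sym2 V → Bool)).card := by
            simp [Fintype.card_fun, hM]
        _ ≤ (A.biUnion (fun a => Finset.univ.filter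
              (fun f : Sym2 V → Bool => a ⊆ coverOf H f))).card := Finset.card_le_card hsub
        _ ≤ ∑ a ∈ A, (Finset.univ.filter
              (fun f : Sym2 V → Bool => a ⊆ coverOf H f)).card := Finset.card_biUnion_le
    have hcountR : (2 : ℝ) ^ M ≤ ∑ a ∈ A,
        ((Finset.univ.filter (fun f : Sym2 V → Bool => a ⊆ coverOf H f)).card : ℝ) := by
      exact_mod_cast hcount
    have hsum : (∑ a ∈ A,
        ((Finset.univ.filter (fun f : Sym2 V → Bool => a ⊆ coverOf H f)).card : ℝ))
        ≤ (A.card : ℝ) * (c * 2 ^ M) := by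
      calc (∑ a ∈ A,
          ((Finset.univ.filter (fun f : Sym2 V → Bool => a ⊆ coverOf H f)).card : ℝ))
          ≤ ∑ _a ∈ A, (c * 2 ^ M) := Finset.sum_le_sum perA
        _ = (A.card : ℝ) * (c * 2 ^ M) := by rw [Finset.sum_const, nsmul_eq_mul]
    have hfinal : (A.card : ℝ) * (c * 2 ^ M) < 2 ^ M := by
      have : (A.card : ℝ) * (c * 2 ^ M) < c⁻¹ * (c * 2 ^ M) := by
        apply mul_lt_mul_of_pos_right hcardA (by positivity)
      calc (A.card : ℝ) * (c * 2 ^ M) < c⁻¹ * (c * 2 ^ M) := this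
        _ = 2 ^ M := by field_simp
    linarith [hcountR, hsum, hfinal]
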